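/- Let G be a simple connected graph with n ≥ 2 vertices and m edges, and write a_k = d(G,k). Then the closeness of the Mycielskian of G is C(μ(G)) = (1/16)(9n² + 23n + 38m + 14a_2 + 2a_3). -/

import Mathlib

open SimpleGraph Polynomial Finset

/-- The Mycielskian `μ(G)` of a simple graph `G`. Vertices `Sum.inl v` are the original
vertices `v_i`, vertices `Sum.inr (Sum.inl v)` are the shadow vertices `u_i`, and
`Sum.inr (Sum.inr ())` is the apex vertex `w`.  Edges: the edges of `G`, the edges `w u_i`,
and the edges `u_i v_j`, `u_j v_i` for every edge `v_i v_j` of `G`. -/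
def mycielskian {V : Type*} (G : SimpleGraph V) : SimpleGraph (V ⊕ V ⊕ Unit) :=
  SimpleGraph.fromRel (fun a b =>
    match a, b with
    | Sum.inl a, Sum.inl b => G.Adj a b
    | Sum.inl a, Sum.inr (Sum.inl b) => G.Adj a b
    | Sum.inr (Sum.inl _), Sum.inr (Sum.inr _) => True
    | _, _ => False)

/-- `distCount G k` is `d(G,k)`, the number of unordered pairs of distinct vertices of `G`
whose graph distance is exactly `k`. -/
noncomputable def distCount {V : Type*} (G : SimpleGraph V) (k : ℕ) : ℕ :=
  Nat.card {e : Sym2 V // ¬ e.IsDiag ∧ Sym2.lift ⟨G.dist, fun _ _ => G.dist_comm⟩ e = k}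

/-- The Hosoya polynomial `H(G,x) = Σ_{k=1}^{D(G)} d(G,k) x^k` (with rational coefficients). -/
noncomputable def hosoya {V : Type*} (G : SimpleGraph V) : Polynomial ℚ :=
  ∑ k ∈ Finset.Icc 1 G.diam, (distCount G k : ℚ) • Polynomial.X ^ k

/-- The Wiener index `W(G)`: the sum of distances over all unordered pairs of distinct
vertices (the diagonal contributes `0`, so we may sum over ordered pairs and halve). -/
noncomputable def wiener {V : Type*} (G : SimpleGraph V) [Fintype V] : ℚ :=
  (∑ u : V, ∑ v : V, (G.dist u v : ℚ)) / 2

/-- The Hyper-Wiener index `WW(G) = (1/2) Σ_{{u,v}} (d(u,v)² + d(u,v))`. -/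
noncomputable def hyperWiener {V : Type*} (G : SimpleGraph V) [Fintype V] : ℚ :=
  (∑ u : V, ∑ v : V, ((G.dist u v : ℚ) ^ 2 + (G.dist u v : ℚ))) / 4

/-- The TSZ index `TSZ(G) = (1/6) Σ_{{u,v}} d³ + (1/2) Σ_{{u,v}} d² + (1/3) Σ_{{u,v}} d`. -/
noncomputable def tszIndex {V : Type*} (G : SimpleGraph V) [Fintype V] : ℚ :=
  (∑ u : V, ∑ v : V, (G.dist u v : ℚ) ^ 3) / 12
    + (∑ u : V, ∑ v : V, (G.dist u v : ℚ) ^ 2) / 4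
    + (∑ u : V, ∑ v : V, (G.dist u v : ℚ)) / 6

/-- The Harary index `Har(G) = Σ_{{u,v}} 1/d(u,v)` (diagonal terms are `0⁻¹ = 0`). -/
noncomputable def harary {V : Type*} (G : SimpleGraph V) [Fintype V] : ℚ :=
  (∑ u : V, ∑ v : V, ((G.dist u v : ℚ))⁻¹) / 2

/-- The closeness `C(G) = Σ_u Σ_{v ≠ u} 2^{-d(u,v)}` over ordered pairs of distinct vertices. -/
noncomputable def closeness {V : Type*} (G : SimpleGraph V) [Fintype V] : ℚ :=
  letI := Classical.decEq V
  ∑ u : V, ∑ v : V, if v = u then 0 else ((1 : ℚ) / 2) ^ (G.dist u v)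

/-- `σ_{uv}`: the number of shortest paths (walks of length `dist u v`) from `u` to `v`. -/
noncomputable def numSP {V : Type*} (G : SimpleGraph V) (u v : V) : ℕ :=
  Nat.card {p : G.Walk u v // p.length = G.dist u v}

/-- `σ_{uv}(w)`: the number of shortest paths from `u` to `v` passing through `w`. -/
noncomputable def numSPthrough {V : Type*} (G : SimpleGraph V) (w u v : V) : ℕ :=
  Nat.card {p : G.Walk u v // p.length = G.dist u v ∧ w ∈ p.support}

/-- The betweenness centrality `B_w = Σ_{{u,v}, u ≠ w ≠ v} σ_{uv}(w)/σ_{uv}` of a vertex `w`,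
summed over unordered pairs of distinct vertices (ordered pairs, halved). -/
noncomputable def btwVertex {V : Type*} (G : SimpleGraph V) [Fintype V] (w : V) : ℚ :=
  letI := Classical.decEq V
  (∑ u : V, ∑ v : V,
    if u ≠ v ∧ u ≠ w ∧ v ≠ w then (numSPthrough G w u v : ℚ) / (numSP G u v) else 0) / 2

/-- The betweenness centrality of a graph: `B⁻(G) = (1/N) Σ_w B_w`. -/
noncomputable def btw {V : Type*} (G : SimpleGraph V) [Fintype V] : ℚ :=
  (∑ w : V, btwVertex G w) / (Fintype.card V)

/-- The star graph `S_n`: center `0` joined to the `n` leaves `1, …, n`. -/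
def starGraph (n : ℕ) : SimpleGraph (Fin (n + 1)) :=
  SimpleGraph.fromRel (fun a _ => a = 0)

/-- The join `G₁ ⊕ G₂` of two graphs on disjoint vertex sets: all edges of `G₁`, all edges
of `G₂`, and all edges between `V(G₁)` and `V(G₂)`. -/
def joinGraph {V₁ V₂ : Type*} (G₁ : SimpleGraph V₁) (G₂ : SimpleGraph V₂) :
    SimpleGraph (V₁ ⊕ V₂) :=
  SimpleGraph.fromRel (fun a b =>
    match a, b with
    | Sum.inl a, Sum.inl b => G₁.Adj a b
    | Sum.inr a, Sum.inr b => G₂.Adj a b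
    | Sum.inl _, Sum.inr _ => True
    | _, _ => False)



namespace Myc
variable {V : Type*} (G : SimpleGraph V)

abbrev W (V : Type*) := V ⊕ V ⊕ Unit
def vl (i : V) : W V := Sum.inl i
def vu (i : V) : W V := Sum.inr (Sum.inl i)
def wv : W V := Sum.inr (Sum.inr ())

variable {G}

lemma adj_ll {a b : V} : (mycielskian G).Adj (vl a) (vl b) ↔ G.Adj a b := by
  constructor
  · rintro ⟨h1, h2 | h2⟩
    · exact h2
    · exact h2.symm
  · intro h
    exact ⟨by simp [vl, h.ne], Or.inl h⟩

lemma adj_lu {a b : V} : (mycielskian G).Adj (vl a) (vu b) ↔ G.Adj a b := by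
  constructor
  · rintro ⟨h1, h2 | h2⟩
    · exact h2
    · exact h2.elim
  · intro h
    exact ⟨by simp [vl, vu], Or.inl h⟩

lemma adj_ul {a b : V} : (mycielskian G).Adj (vu a) (vl b) ↔ G.Adj b a :=
  (mycielskian G).adj_comm _ _ |>.trans adj_lu

lemma adj_uw {a : V} : (mycielskian G).Adj (vu a) wv := by
  exact ⟨by simp [vu, wv], Or.inl trivial⟩

lemma adj_wu {a : V} : (mycielskian G).Adj wv (vu a) := adj_uw.symm

lemma not_adj_uu {a b : V} : ¬ (mycielskian G).Adj (vu a) (vu b) := by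
  rintro ⟨h1, h2 | h2⟩ <;> exact h2

lemma not_adj_lw {a : V} : ¬ (mycielskian G).Adj (vl a) wv := by
  rintro ⟨h1, h2 | h2⟩ <;> exact h2

lemma not_adj_wl {a : V} : ¬ (mycielskian G).Adj wv (vl a) :=
  fun h => not_adj_lw h.symm

end Myc

namespace Myc
variable {V : Type*} {G : SimpleGraph V}

/-- base projection -/
def base (v0 : V) : W V → V
  | Sum.inl a => a
  | Sum.inr (Sum.inl a) => a
  | Sum.inr (Sum.inr _) => v0

lemma adj_base (v0 : V) {x y : W V} (h : (mycielskian G).Adj x y)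
    (hx : x ≠ wv) (hy : y ≠ wv) : G.Adj (base v0 x) (base v0 y) := by
  match x, y with
  | Sum.inl a, Sum.inl b => exact adj_ll.mp h
  | Sum.inl a, Sum.inr (Sum.inl b) => exact adj_lu.mp h
  | Sum.inr (Sum.inl a), Sum.inl b => exact (adj_ul.mp h).symm
  | Sum.inr (Sum.inl a), Sum.inr (Sum.inl b) => exact absurd h not_adj_uu
  | Sum.inl a, Sum.inr (Sum.inr u) => exact absurd h not_adj_lw
  | Sum.inr (Sum.inr u), Sum.inl b => exact absurd h not_adj_wl
  | Sum.inr (Sum.inr u), _ => exact absurd rfl hx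
  | _, Sum.inr (Sum.inr u) => exact absurd rfl hy

lemma proj_walk (hc : G.Connected) (v0 : V) {x y : W V}
    (p : (mycielskian G).Walk x y) (hw : wv ∉ p.support) :
    G.dist (base v0 x) (base v0 y) ≤ p.length := by
  induction p with
  | nil => simp
  | @cons a b c h q ih =>
    have hb : (wv : W V) ∉ q.support := fun hh => hw (by simp [SimpleGraph.Walk.support_cons, hh])
    have ha : a ≠ wv := fun hh => hw (by simp [SimpleGraph.Walk.support_cons, hh])
    have hbb : b ≠ wv := fun hh => hw (by
      simp [SimpleGraph.Walk.support_cons]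
      exact Or.inr (hh ▸ q.start_mem_support))
    have hadj : G.Adj (base v0 a) (base v0 b) := adj_base v0 h ha hbb
    calc G.dist (base v0 a) (base v0 c)
        ≤ G.dist (base v0 a) (base v0 b) + G.dist (base v0 b) (base v0 c) := hc.dist_triangle
      _ ≤ 1 + q.length := by
          have := SimpleGraph.dist_le hadj.toWalk
          have h2 := ih hb
          simp at this
          omega
      _ = (SimpleGraph.Walk.cons h q).length := by simp [SimpleGraph.Walk.length_cons]; omega

lemma through_w {x y : W V} (p : (mycielskian G).Walk x y) (hw : (wv : W V) ∈ p.support) :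
    (mycielskian G).dist x wv + (mycielskian G).dist wv y ≤ p.length := by
  classical
  have hs := p.take_spec hw
  have : (p.takeUntil wv hw).length + (p.dropUntil wv hw).length = p.length := by
    rw [← SimpleGraph.Walk.length_append, hs]
  have h1 := SimpleGraph.dist_le (p.takeUntil wv hw)
  have h2 := SimpleGraph.dist_le (p.dropUntil wv hw)
  omega

lemma myc_connected (hc : G.Connected) (hcard : ∃ i j : V, i ≠ j) :
    (mycielskian G).Connected := by
  obtain ⟨i0, j0, hij⟩ := hcard
  have hreach : ∀ x : W V, (mycielskian G).Reachable x wv := by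
    intro x
    match x with
    | Sum.inr (Sum.inr u) => exact SimpleGraph.Reachable.refl _
    | Sum.inr (Sum.inl a) => exact (adj_uw (a := a)).reachable
    | Sum.inl a =>
      have hne : ∃ k, G.Adj a k := by
        rcases eq_or_ne a j0 with rfl | h
        · obtain ⟨p⟩ := hc a i0
          cases p with
          | nil => exact absurd rfl (Ne.symm hij)
          | cons h q => exact ⟨_, h⟩
        · obtain ⟨p⟩ := hc a j0
          cases p with
          | nil => exact absurd rfl h
          | cons h q => exact ⟨_, h⟩
      obtain ⟨k, hk⟩ := hne
      exact ((adj_lu.mpr hk).reachable).trans (adj_uw (a := k)).reachable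
  constructor
  · intro x y
    exact (hreach x).trans (hreach y).symm

end Myc

namespace Myc
variable {V : Type*} {G : SimpleGraph V}

lemma dist_le_two {W' : Type*} {H : SimpleGraph W'} {u v x : W'}
    (h1 : H.Adj u x) (h2 : H.Adj x v) : H.dist u v ≤ 2 := by
  have := SimpleGraph.dist_le (SimpleGraph.Walk.cons h1 (SimpleGraph.Walk.cons h2 SimpleGraph.Walk.nil))
  simpa using this

lemma dist_le_three {W' : Type*} {H : SimpleGraph W'} {u v x y : W'}
    (h1 : H.Adj u x) (h2 : H.Adj x y) (h3 : H.Adj y v) : H.dist u v ≤ 3 := by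
  have := SimpleGraph.dist_le (SimpleGraph.Walk.cons h1 (SimpleGraph.Walk.cons h2
    (SimpleGraph.Walk.cons h3 SimpleGraph.Walk.nil)))
  simpa using this

lemma dist_le_four {W' : Type*} {H : SimpleGraph W'} {u v x y z : W'}
    (h1 : H.Adj u x) (h2 : H.Adj x y) (h3 : H.Adj y z) (h4 : H.Adj z v) : H.dist u v ≤ 4 := by
  have := SimpleGraph.dist_le (SimpleGraph.Walk.cons h1 (SimpleGraph.Walk.cons h2
    (SimpleGraph.Walk.cons h3 (SimpleGraph.Walk.cons h4 SimpleGraph.Walk.nil))))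
  simpa using this

lemma mid_of_dist_two (hc : G.Connected) {i j : V} (h : G.dist i j = 2) :
    ∃ x, G.Adj i x ∧ G.Adj x j := by
  obtain ⟨p, hp⟩ := hc.exists_walk_length_eq_dist i j
  rw [h] at hp
  cases p with
  | nil => simp at hp
  | cons h1 q =>
    cases q with
    | nil => simp at hp
    | cons h2 r =>
      have : r.length = 0 := by simp only [SimpleGraph.Walk.length_cons] at hp; omega
      have := SimpleGraph.Walk.eq_of_length_eq_zero this
      subst this
      exact ⟨_, h1, h2⟩

def homVL : G →g mycielskian G := ⟨Sum.inl, fun h => adj_ll.mpr h⟩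

lemma dist_ll_le (i j : V) (hr : G.Reachable i j) :
    (mycielskian G).dist (vl i) (vl j) ≤ G.dist i j := by
  obtain ⟨p, hp⟩ := hr.exists_walk_length_eq_dist
  have := SimpleGraph.dist_le (p.map (homVL (G := G)))
  rwa [SimpleGraph.Walk.length_map, hp] at this

end Myc

namespace Myc
variable {V : Type*} {G : SimpleGraph V}
variable (hc : G.Connected) (hnbr : ∀ i : V, ∃ k, G.Adj i k)
  (hC : (mycielskian G).Connected)

section
include hC

lemma dist_wu (i : V) : (mycielskian G).dist wv (vu i) = 1 :=
  SimpleGraph.dist_eq_one_iff_adj.mpr adj_wu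

lemma dist_uw (i : V) : (mycielskian G).dist (vu i) wv = 1 :=
  SimpleGraph.dist_eq_one_iff_adj.mpr adj_uw

lemma dist_uu {i j : V} (hij : i ≠ j) : (mycielskian G).dist (vu i) (vu j) = 2 := by
  have hle : (mycielskian G).dist (vu i) (vu j) ≤ 2 := dist_le_two adj_uw adj_wu
  have h0 : (mycielskian G).dist (vu i) (vu j) ≠ 0 := by
    have := (hC (vu i) (vu j)).pos_dist_of_ne (by simp [vu, hij])
    omega
  have h1 : (mycielskian G).dist (vu i) (vu j) ≠ 1 := by
    rw [ne_eq, SimpleGraph.dist_eq_one_iff_adj]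
    exact not_adj_uu
  omega

end

section
include hnbr hC

lemma dist_wl (i : V) : (mycielskian G).dist wv (vl i) = 2 := by
  obtain ⟨k, hk⟩ := hnbr i
  have hle : (mycielskian G).dist wv (vl i) ≤ 2 := dist_le_two adj_wu (adj_ul.mpr hk)
  have h0 : (mycielskian G).dist wv (vl i) ≠ 0 := by
    have := (hC wv (vl i)).pos_dist_of_ne (by simp [vl, wv])
    omega
  have h1 : (mycielskian G).dist wv (vl i) ≠ 1 := by
    rw [ne_eq, SimpleGraph.dist_eq_one_iff_adj]
    exact not_adj_wl
  omega

lemma dist_lw (i : V) : (mycielskian G).dist (vl i) wv = 2 := by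
  rw [SimpleGraph.dist_comm]; exact dist_wl hnbr hC i

lemma dist_uv_self (i : V) : (mycielskian G).dist (vu i) (vl i) = 2 := by
  obtain ⟨k, hk⟩ := hnbr i
  have hle : (mycielskian G).dist (vu i) (vl i) ≤ 2 :=
    dist_le_two (adj_ul.mpr hk.symm) (adj_ll.mpr hk.symm)
  have h0 : (mycielskian G).dist (vu i) (vl i) ≠ 0 := by
    have := (hC (vu i) (vl i)).pos_dist_of_ne (by simp [vl, vu])
    omega
  have h1 : (mycielskian G).dist (vu i) (vl i) ≠ 1 := by
    rw [ne_eq, SimpleGraph.dist_eq_one_iff_adj, adj_ul]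
    exact fun h => (G.irrefl h)
  omega

end

section
include hc hnbr hC

lemma dist_uv {i j : V} (hij : i ≠ j) :
    (mycielskian G).dist (vu i) (vl j) = min (G.dist i j) 3 := by
  have hd1 : 1 ≤ G.dist i j := (hc i j).pos_dist_of_ne hij
  -- upper bound
  have hle : (mycielskian G).dist (vu i) (vl j) ≤ min (G.dist i j) 3 := by
    obtain ⟨k, hk⟩ := hnbr j
    have hle3 : (mycielskian G).dist (vu i) (vl j) ≤ 3 :=
      dist_le_three adj_uw adj_wu (adj_ul.mpr hk)
    rcases Nat.lt_or_ge (G.dist i j) 3 with h | h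
    · rw [min_eq_left (by omega)]
      interval_cases hd : (G.dist i j)
      · -- dist = 1 : adjacent
        have : G.Adj i j := SimpleGraph.dist_eq_one_iff_adj.mp hd
        exact SimpleGraph.dist_le (adj_ul.mpr this.symm).toWalk
      · obtain ⟨x, hx1, hx2⟩ := mid_of_dist_two hc hd
        exact dist_le_two (adj_ul.mpr hx1.symm) (adj_ll.mpr hx2)
    · rw [min_eq_right h]; exact hle3
  -- lower bound
  have hge : min (G.dist i j) 3 ≤ (mycielskian G).dist (vu i) (vl j) := by
    classical
    obtain ⟨p, hp⟩ := hC.exists_walk_length_eq_dist (vu i) (vl j)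
    rw [← hp]
    rcases Classical.em ((wv : W V) ∈ p.support) with hw | hw
    · have := through_w p hw
      rw [dist_uw hC, dist_wl hnbr hC] at this
      omega
    · have := proj_walk hc i p hw
      simp only [vl, vu, base] at this
      exact (min_le_left _ _).trans this
  omega

lemma dist_ll {i j : V} (hij : i ≠ j) :
    (mycielskian G).dist (vl i) (vl j) = min (G.dist i j) 4 := by
  have hd1 : 1 ≤ G.dist i j := (hc i j).pos_dist_of_ne hij
  have hle : (mycielskian G).dist (vl i) (vl j) ≤ min (G.dist i j) 4 := by
    obtain ⟨k, hk⟩ := hnbr i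
    obtain ⟨l, hl⟩ := hnbr j
    have hle4 : (mycielskian G).dist (vl i) (vl j) ≤ 4 :=
      dist_le_four (adj_lu.mpr hk) adj_uw adj_wu (adj_ul.mpr hl)
    have hled : (mycielskian G).dist (vl i) (vl j) ≤ G.dist i j := dist_ll_le i j (hc i j)
    omega
  have hge : min (G.dist i j) 4 ≤ (mycielskian G).dist (vl i) (vl j) := by
    classical
    obtain ⟨p, hp⟩ := hC.exists_walk_length_eq_dist (vl i) (vl j)
    rw [← hp]
    rcases Classical.em ((wv : W V) ∈ p.support) with hw | hw
    · have := through_w p hw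
      rw [dist_lw hnbr hC, dist_wl hnbr hC] at this
      omega
    · have := proj_walk hc i p hw
      simp only [vl, vu, base] at this
      exact (min_le_left _ _).trans this
  omega

lemma dist_vu {i j : V} (hij : i ≠ j) :
    (mycielskian G).dist (vl j) (vu i) = min (G.dist i j) 3 := by
  rw [SimpleGraph.dist_comm]; exact dist_uv hc hnbr hC hij

end
end Myc

section Count

variable {V : Type*} [Fintype V] (G : SimpleGraph V)

open Classical in
lemma distCount_eq_card (k : ℕ) (hk : 1 ≤ k) :
    (Finset.univ.filter (fun p : V × V => G.dist p.1 p.2 = k)).card = 2 * distCount G k := by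
  classical
  have hdc : distCount G k = (Finset.univ.filter
      (fun e : Sym2 V => ¬ e.IsDiag ∧ Sym2.lift ⟨G.dist, fun _ _ => G.dist_comm⟩ e = k)).card := by
    rw [distCount, Nat.card_eq_fintype_card]
    convert Fintype.card_subtype _
  rw [hdc]
  rw [Finset.card_eq_sum_card_fiberwise (f := fun p : V × V => s(p.1, p.2))
    (t := Finset.univ.filter
      (fun e : Sym2 V => ¬ e.IsDiag ∧ Sym2.lift ⟨G.dist, fun _ _ => G.dist_comm⟩ e = k))]
  · rw [Finset.sum_congr rfl (g := fun _ => 2), Finset.sum_const, smul_eq_mul, mul_comm]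
    intro e he
    induction e using Sym2.ind with
    | _ a b =>
      simp only [Finset.mem_filter, Sym2.mk_isDiag_iff, Sym2.lift_mk] at he
      obtain ⟨-, hab, hd⟩ := he
      have : (Finset.univ.filter (fun p : V × V => G.dist p.1 p.2 = k)).filter
          (fun p => s(p.1, p.2) = s(a, b)) = {(a, b), (b, a)} := by
        ext ⟨x, y⟩
        simp only [Finset.mem_filter, Finset.mem_univ, true_and, Finset.mem_insert,
          Finset.mem_singleton, Sym2.eq_iff, Prod.mk.injEq]
        constructor
        · rintro ⟨-, ⟨rfl, rfl⟩ | ⟨rfl, rfl⟩⟩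
          · exact Or.inl ⟨rfl, rfl⟩
          · exact Or.inr ⟨rfl, rfl⟩
        · rintro (⟨rfl, rfl⟩ | ⟨rfl, rfl⟩)
          · exact ⟨hd, Or.inl ⟨rfl, rfl⟩⟩
          · exact ⟨by rwa [G.dist_comm], Or.inr ⟨rfl, rfl⟩⟩
      rw [this]
      rw [Finset.card_insert_of_notMem (by simp [Prod.ext_iff]; exact fun h => absurd h hab),
        Finset.card_singleton]
  · rintro ⟨x, y⟩ hp
    simp only [Finset.mem_coe, Finset.mem_filter, Finset.mem_univ, true_and] at hp ⊢
    have hxy : x ≠ y := by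
      rintro rfl
      rw [SimpleGraph.dist_self] at hp
      omega
    simp [Sym2.mk_isDiag_iff, hxy, Sym2.lift_mk, hp]

lemma distCount_one (G : SimpleGraph V) : distCount G 1 = Nat.card G.edgeSet := by
  apply Nat.card_congr
  apply Equiv.subtypeEquivRight
  intro e
  induction e using Sym2.ind with
  | _ a b =>
    simp only [Sym2.mk_isDiag_iff, Sym2.lift_mk, SimpleGraph.mem_edgeSet,
      SimpleGraph.dist_eq_one_iff_adj]
    exact ⟨fun h => h.2, fun h => ⟨h.ne, h⟩⟩

lemma sum_indicator (k : ℕ) (c : ℚ) :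
    ∑ i : V, ∑ j : V, (if G.dist i j = k then c else 0)
      = ((Finset.univ.filter (fun p : V × V => G.dist p.1 p.2 = k)).card : ℚ) * c := by
  classical
  have h := Fintype.sum_prod_type (f := fun p : V × V => if G.dist p.1 p.2 = k then c else 0)
  rw [← h, ← Finset.sum_filter, Finset.sum_const, nsmul_eq_mul]

end Count

section SumHelpers
variable {V : Type*} [Fintype V] [DecidableEq V]

lemma sum_offdiag_const (c : ℚ) :
    ∑ i : V, ∑ j : V, (if j = i then 0 else c)
      = ((Fintype.card V : ℚ) ^ 2 - Fintype.card V) * c := by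
  classical
  have h : ∀ i : V, ∑ j : V, (if j = i then (0:ℚ) else c)
      = (Fintype.card V : ℚ) * c - c := by
    intro i
    have : ∀ j : V, (if j = i then (0:ℚ) else c) = c - (if j = i then c else 0) := by
      intro j; by_cases h : j = i <;> simp [h]
    rw [Finset.sum_congr rfl fun j _ => this j, Finset.sum_sub_distrib, Finset.sum_const,
      Finset.sum_ite_eq' Finset.univ i (fun _ => c)]
    simp [mul_comm]
  rw [Finset.sum_congr rfl fun i _ => h i, Finset.sum_sub_distrib, Finset.sum_const,
    Finset.sum_const]
  simp [Finset.card_univ]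
  ring

lemma sum_diag_const (c : ℚ) :
    ∑ i : V, ∑ j : V, (if j = i then c else 0) = (Fintype.card V : ℚ) * c := by
  classical
  have h : ∀ i : V, ∑ j : V, (if j = i then c else (0:ℚ)) = c := by
    intro i
    rw [Finset.sum_ite_eq' Finset.univ i (fun _ => c)]
    simp
  rw [Finset.sum_congr rfl fun i _ => h i, Finset.sum_const]
  simp [mul_comm]

end SumHelpers

namespace Myc
variable {V : Type*} {G : SimpleGraph V}

open Classical in
/-- closed form for the closeness summand of the Mycielskian -/
noncomputable def F (G : SimpleGraph V) : W V → W V → ℚ := fun x y =>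
  match x, y with
  | Sum.inl i, Sum.inl j =>
      (if j = i then 0 else 1/16) + ((if G.dist i j = 1 then 7/16 else 0)
        + ((if G.dist i j = 2 then 3/16 else 0) + (if G.dist i j = 3 then 1/16 else 0)))
  | Sum.inl i, Sum.inr (Sum.inl j) =>
      1/8 + ((if j = i then 1/8 else 0) + ((if G.dist i j = 1 then 3/8 else 0)
        + (if G.dist i j = 2 then 1/8 else 0)))
  | Sum.inl _, Sum.inr (Sum.inr _) => 1/4
  | Sum.inr (Sum.inl i), Sum.inl j =>
      1/8 + ((if j = i then 1/8 else 0) + ((if G.dist i j = 1 then 3/8 else 0)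
        + (if G.dist i j = 2 then 1/8 else 0)))
  | Sum.inr (Sum.inl i), Sum.inr (Sum.inl j) => if j = i then 0 else 1/4
  | Sum.inr (Sum.inl _), Sum.inr (Sum.inr _) => 1/2
  | Sum.inr (Sum.inr _), Sum.inl _ => 1/4
  | Sum.inr (Sum.inr _), Sum.inr (Sum.inl _) => 1/2
  | Sum.inr (Sum.inr _), Sum.inr (Sum.inr _) => 0

variable (hc : G.Connected) (hnbr : ∀ i : V, ∃ k, G.Adj i k)
  (hC : (mycielskian G).Connected)

include hc hnbr hC in
lemma key (x y : W V) {d : Decidable (y = x)} :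
    (@ite ℚ (y = x) d 0 ((1/2) ^ ((mycielskian G).dist x y))) = F G x y := by
  classical
  match x, y with
  | Sum.inl i, Sum.inl j =>
    by_cases hji : j = i
    · subst hji
      rw [if_pos rfl]
      simp [F, SimpleGraph.dist_self]
    · have hij : i ≠ j := fun h => hji h.symm
      have hd := Myc.dist_ll hc hnbr hC hij
      simp only [Myc.vl] at hd
      rw [if_neg (by simpa using hji), hd]
      simp only [F]
      rw [if_neg hji]
      have h1 : 1 ≤ G.dist i j := (hc i j).pos_dist_of_ne hij
      rcases (show G.dist i j = 1 ∨ G.dist i j = 2 ∨ G.dist i j = 3 ∨ 4 ≤ G.dist i j by omega)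
        with h | h | h | h
      · rw [h]; norm_num
      · rw [h]; norm_num
      · rw [h]; norm_num
      · rw [min_eq_right (by omega), if_neg (by omega), if_neg (by omega), if_neg (by omega)]
        norm_num
  | Sum.inl i, Sum.inr (Sum.inl j) =>
    rw [if_neg (by simp)]
    simp only [F]
    by_cases hji : j = i
    · subst hji
      have hd := Myc.dist_uv_self hnbr hC j
      simp only [Myc.vl, Myc.vu] at hd
      rw [show (mycielskian G).dist (Sum.inr (Sum.inl j)) (Sum.inl j)
        = (mycielskian G).dist (Sum.inl j) (Sum.inr (Sum.inl j)) from SimpleGraph.dist_comm] at hd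
      rw [hd, if_pos rfl, if_neg (by simp [SimpleGraph.dist_self]),
        if_neg (by simp [SimpleGraph.dist_self])]
      norm_num
    · have hd := Myc.dist_vu hc hnbr hC (show j ≠ i from hji)
      simp only [Myc.vl, Myc.vu] at hd
      rw [show G.dist j i = G.dist i j from SimpleGraph.dist_comm] at hd
      rw [hd, if_neg hji]
      have h1 : 1 ≤ G.dist i j := (hc i j).pos_dist_of_ne (fun h => hji h.symm)
      rcases (show G.dist i j = 1 ∨ G.dist i j = 2 ∨ 3 ≤ G.dist i j by omega) with h | h | h
      · rw [h]; norm_num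
      · rw [h]; norm_num
      · rw [min_eq_right (by omega), if_neg (by omega), if_neg (by omega)]
        norm_num
  | Sum.inl i, Sum.inr (Sum.inr u) =>
    cases u
    rw [if_neg (by simp)]
    have hd := Myc.dist_lw hnbr hC i
    simp only [Myc.vl, Myc.wv] at hd
    rw [hd]
    norm_num [F]
  | Sum.inr (Sum.inl i), Sum.inl j =>
    rw [if_neg (by simp)]
    simp only [F]
    by_cases hji : j = i
    · subst hji
      have hd := Myc.dist_uv_self hnbr hC j
      simp only [Myc.vl, Myc.vu] at hd
      rw [hd, if_pos rfl, if_neg (by simp [SimpleGraph.dist_self]),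
        if_neg (by simp [SimpleGraph.dist_self])]
      norm_num
    · have hd := Myc.dist_uv hc hnbr hC (show i ≠ j from fun h => hji h.symm)
      simp only [Myc.vl, Myc.vu] at hd
      rw [hd, if_neg hji]
      have h1 : 1 ≤ G.dist i j := (hc i j).pos_dist_of_ne (fun h => hji h.symm)
      rcases (show G.dist i j = 1 ∨ G.dist i j = 2 ∨ 3 ≤ G.dist i j by omega) with h | h | h
      · rw [h]; norm_num
      · rw [h]; norm_num
      · rw [min_eq_right (by omega), if_neg (by omega), if_neg (by omega)]
        norm_num
  | Sum.inr (Sum.inl i), Sum.inr (Sum.inl j) =>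
    simp only [F]
    by_cases hji : j = i
    · subst hji
      rw [if_pos rfl, if_pos rfl]
    · have hd := Myc.dist_uu hC (show i ≠ j from fun h => hji h.symm)
      simp only [Myc.vu] at hd
      rw [if_neg (by simpa using hji), hd, if_neg hji]
      norm_num
  | Sum.inr (Sum.inl i), Sum.inr (Sum.inr u) =>
    cases u
    rw [if_neg (by simp)]
    have hd := Myc.dist_uw hC i
    simp only [Myc.vu, Myc.wv] at hd
    rw [hd]
    norm_num [F]
  | Sum.inr (Sum.inr u), Sum.inl j =>
    cases u
    rw [if_neg (by simp)]
    have hd := Myc.dist_wl hnbr hC j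
    simp only [Myc.vl, Myc.wv] at hd
    rw [hd]
    norm_num [F]
  | Sum.inr (Sum.inr u), Sum.inr (Sum.inl j) =>
    cases u
    rw [if_neg (by simp)]
    have hd := Myc.dist_wu hC j
    simp only [Myc.vu, Myc.wv] at hd
    rw [hd]
    norm_num [F]
  | Sum.inr (Sum.inr u), Sum.inr (Sum.inr u') =>
    cases u; cases u'
    rw [if_pos rfl]
    simp [F]

end Myc

/-- For a connected graph `G` with `n ≥ 2` vertices and `m` edges, with
`a_k = d(G,k)`, the closeness of `μ(G)` is `(1/16)(9n² + 23n + 38m + 14a₂ + 2a₃)`. -/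
theorem stmt_15 {V : Type*} [Fintype V] (G : SimpleGraph V) (n m : ℕ)
    (hn : Fintype.card V = n) (hn2 : 2 ≤ n) (hm : Nat.card G.edgeSet = m)
    (hc : G.Connected) :
    closeness (mycielskian G) =
      (9 * (n : ℚ) ^ 2 + 23 * n + 38 * m + 14 * distCount G 2 + 2 * distCount G 3) / 16 := by
  classical
  subst hn hm
  have hnbr : ∀ i : V, ∃ k, G.Adj i k := by
    intro i
    obtain ⟨j, hj⟩ := Fintype.exists_ne_of_one_lt_card (by omega) i
    obtain ⟨p⟩ := hc i j
    cases p with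
    | nil => exact absurd rfl hj
    | cons h q => exact ⟨_, h⟩
  have hV : Nonempty V := Fintype.card_pos_iff.mp (by omega)
  obtain ⟨v0⟩ := hV
  have hC : (mycielskian G).Connected := by
    refine Myc.myc_connected hc ?_
    obtain ⟨j, hj⟩ := Fintype.exists_ne_of_one_lt_card (by omega) v0
    exact ⟨j, v0, hj⟩
  have hstep : closeness (mycielskian G) = ∑ x : Myc.W V, ∑ y : Myc.W V, Myc.F G x y := by
    rw [closeness]
    exact Finset.sum_congr rfl fun x _ => Finset.sum_congr rfl fun y _ =>
      Myc.key hc hnbr hC x y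
  rw [hstep]
  simp only [Fintype.sum_sum_type, Fintype.sum_unique, Myc.F]
  simp only [Finset.sum_add_distrib]
  rw [sum_offdiag_const, sum_indicator, sum_indicator, sum_indicator,
    sum_diag_const, sum_indicator, sum_indicator, sum_offdiag_const]
  simp only [Finset.sum_const, Finset.card_univ, nsmul_eq_mul]
  rw [distCount_eq_card G 1 le_rfl, distCount_eq_card G 2 (by omega),
    distCount_eq_card G 3 (by omega)]
  rw [distCount_one]
  push_cast
  ring
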